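/- Let G be a transient, connected, locally finite graph and let o be a vertex of G. Then for all integers n, m ≥ 0, P^G_{o,o}( X_n = Y_m, {X_i : i ≥ n} ∩ {Y_j : j > m} = ∅, {X_i : i > n} ∩ {Y_j : j ≤ m} = ∅ ) = Σ_{v ∈ V(G)} (deg(v)²/deg(o)²) · P^G_{v,v}( X_{−n} = Y_{−m} = o, {X_i : i ≥ 0} ∩ {Y_j : j > 0} = ∅, {X_i : i > 0} ∩ {Y_j : j ≤ 0} = ∅ ). (The event on the left-hand side is the event that the lexicographic maximum of {(i,j) : X_i = Y_j} exists and equals (n,m).) -/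

import Mathlib

open MeasureTheory
open scoped ENNReal Classical

noncomputable section

namespace ArborealGas

/-- The degree of a vertex in a graph. -/
def graphDeg {V : Type*} (G : SimpleGraph V) (v : V) : ℕ := (G.neighborSet v).ncard

/-- One-step transition probability of the simple random walk on `G`. -/
def stepProb {V : Type*} (G : SimpleGraph V) (a b : V) : ℝ≥0∞ :=
  if G.Adj a b then ((graphDeg G a : ℝ≥0∞))⁻¹ else 0

/-- `n`-step transition probabilities of the simple random walk on `G`. -/
def transN {V : Type*} (G : SimpleGraph V) : ℕ → V → V → ℝ≥0∞
  | 0 => fun a b => if a = b then 1 else 0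
  | n + 1 => fun a b => ∑' c, transN G n a c * stepProb G c b

/-- `G` is transient: the expected number of visits of the simple random walk to its
starting point is finite. -/
def Transient {V : Type*} (G : SimpleGraph V) : Prop :=
  ∀ v : V, (∑' n : ℕ, transN G n v v) ≠ ⊤

/-- The probability that a doubly-infinite simple random walk on `G` started at `u`
agrees with the path `x` on the time window `[-a, b]`. -/
def walkCylWeight {V : Type*} (G : SimpleGraph V) (u : V) (a b : ℕ) (x : ℤ → V) : ℝ≥0∞ :=
  (if x 0 = u then 1 else 0) *
    (∏ i ∈ Finset.range b, stepProb G (x (i : ℤ)) (x ((i : ℤ) + 1))) *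
    (∏ i ∈ Finset.range a, stepProb G (x (-(i : ℤ))) (x (-(i : ℤ) - 1)))

/-- `μ` is the joint law `P^G_{u,v}` of two independent doubly-infinite simple random walks
`X` and `Y` on `G` started at `u` and `v`, characterized by its cylinder probabilities. -/
def IsDoubleWalkLaw {V : Type*} [MeasurableSpace V] (G : SimpleGraph V) (u v : V)
    (μ : Measure ((ℤ → V) × (ℤ → V))) : Prop :=
  IsProbabilityMeasure μ ∧
  ∀ (a b c d : ℕ) (x y : ℤ → V),
    μ {ω | (∀ i : ℤ, -(a : ℤ) ≤ i → i ≤ (b : ℤ) → ω.1 i = x i) ∧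
           (∀ j : ℤ, -(c : ℤ) ≤ j → j ≤ (d : ℤ) → ω.2 j = y j)}
      = walkCylWeight G u a b x * walkCylWeight G v c d y

/-- The σ-algebra on the space of subgraphs of `G`: the product (cylinder) σ-algebra. -/
instance subgraphMeasurableSpace {V : Type*} (G : SimpleGraph V) :
    MeasurableSpace G.Subgraph :=
  MeasurableSpace.comap
    (fun S => ((fun v => v ∈ S.verts), S.Adj) :
      G.Subgraph → (V → Prop) × (V → V → Prop)) inferInstance

/-- The degree of a vertex inside a subgraph. -/
def subDeg {V : Type*} {G : SimpleGraph V} (S : G.Subgraph) (v : V) : ℕ :=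
  {w | S.Adj v w}.ncard

/-- One-step transition probability of the simple random walk on the subgraph `S`. -/
def stepIn {V : Type*} {G : SimpleGraph V} (S : G.Subgraph) (a b : V) : ℝ≥0∞ :=
  if S.Adj a b then ((subDeg S a : ℝ≥0∞))⁻¹ else 0

/-- The probability that the simple random walk on the subgraph `S` started at `v`
agrees with the path `x` on the time window `[0, n]`. -/
def srwCylIn {V : Type*} {G : SimpleGraph V} (S : G.Subgraph) (v : V) (n : ℕ)
    (x : ℕ → V) : ℝ≥0∞ :=
  (if x 0 = v then 1 else 0) * ∏ i ∈ Finset.range n, stepIn S (x i) (x (i + 1))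

/-- `n`-step transition probabilities of the simple random walk on the subgraph `S`. -/
def transNIn {V : Type*} {G : SimpleGraph V} (S : G.Subgraph) : ℕ → V → V → ℝ≥0∞
  | 0 => fun a b => if a = b then 1 else 0
  | n + 1 => fun a b => ∑' c, transNIn S n a c * stepIn S c b

/-- The Green's function of the simple random walk on the subgraph `S`. -/
def green {V : Type*} {G : SimpleGraph V} (S : G.Subgraph) (a b : V) : ℝ≥0∞ :=
  ∑' n : ℕ, transNIn S n a b

/-- The hypercubic lattice `ℤ^d`: vertices `Fin d → ℤ`, edges between points at
`ℓ¹`-distance one. -/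
def ZdGraph (d : ℕ) : SimpleGraph (Fin d → ℤ) where
  Adj x y := ∑ i, (x i - y i).natAbs = 1
  symm := ⟨by
    intro x y h
    rw [← h]
    exact Finset.sum_congr rfl fun i _ => by omega⟩
  loopless := ⟨by intro x h; simp at h⟩

/-- Translation of subgraphs of `ℤ^d` by a lattice vector `t`. -/
def translateSub {d : ℕ} (t : Fin d → ℤ) (S : (ZdGraph d).Subgraph) :
    (ZdGraph d).Subgraph where
  verts := {v | v - t ∈ S.verts}
  Adj u v := S.Adj (u - t) (v - t)
  adj_sub := by
    intro u v h
    have h2 := S.adj_sub h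
    simpa [ZdGraph, sub_sub_sub_cancel_right] using h2
  edge_vert := by intro u v h; exact S.edge_vert h
  symm := ⟨fun _ _ h => S.symm.symm _ _ h⟩

/-- The subgraph of `G` induced by a set `I` of vertices. -/
def traceSub {V : Type*} (G : SimpleGraph V) (I : Set V) : G.Subgraph where
  verts := I
  Adj u v := G.Adj u v ∧ u ∈ I ∧ v ∈ I
  adj_sub h := h.1
  edge_vert h := h.2.1
  symm := ⟨fun _ _ h => ⟨h.1.symm, h.2.2, h.2.1⟩⟩

open Classical in
/-- The conditional cylinder probability, given the environment `S`, of the walk started at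
the origin: if the origin has at least one `S`-neighbour this is the cylinder probability of
the simple random walk on the component of the origin in `S`; otherwise the walk is frozen
at the origin. -/
def originCondCyl (d : ℕ) (S : (ZdGraph d).Subgraph) (n : ℕ)
    (x : ℕ → Fin d → ℤ) : ℝ≥0∞ :=
  if ∃ b, S.Adj 0 b then srwCylIn S 0 n x
  else if ∀ i ≤ n, x i = 0 then 1 else 0

/-- `μ` is the joint law of a random environment `ω` with law `P` together with (conditionally
on `ω`) a simple random walk started at the origin on the component of the origin in `ω`
(frozen at the origin if the origin has no `ω`-neighbour). -/
def IsEnvWalkLaw (d : ℕ) (P : Measure (ZdGraph d).Subgraph)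
    (μ : Measure ((ZdGraph d).Subgraph × (ℕ → Fin d → ℤ))) : Prop :=
  IsProbabilityMeasure μ ∧ μ.map Prod.fst = P ∧
  ∀ B : Set (ZdGraph d).Subgraph, MeasurableSet B → ∀ (n : ℕ) (x : ℕ → Fin d → ℤ),
    μ (B ×ˢ {ω | ∀ i ≤ n, ω i = x i}) = ∫⁻ S in B, originCondCyl d S n x ∂P

/-- The supremum norm `‖x‖_∞` of a point of `ℤ^d`. -/
def supNormZ {d : ℕ} (x : Fin d → ℤ) : ℕ := Finset.univ.sup fun j => (x j).natAbs

/-- `μ₂` is the joint law of two conditionally independent simple random walks on the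
subgraph `Γ`, both started at `v`, characterized by its cylinder probabilities. -/
def IsPairSRWOn {V : Type*} [MeasurableSpace V] {G : SimpleGraph V} (Γ : G.Subgraph)
    (v : V) (μ₂ : Measure ((ℕ → V) × (ℕ → V))) : Prop :=
  IsProbabilityMeasure μ₂ ∧
  ∀ (n m : ℕ) (x y : ℕ → V),
    μ₂ {ω | (∀ i ≤ n, ω.1 i = x i) ∧ (∀ j ≤ m, ω.2 j = y j)}
      = srwCylIn Γ v n x * srwCylIn Γ v m y

section Aux

variable {V : Type*} {G : SimpleGraph V}

lemma graphDeg_ne_zero (hlf : ∀ v : V, (G.neighborSet v).Finite)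
    {a b : V} (hab : G.Adj a b) : graphDeg G a ≠ 0 := by
  intro h
  rw [graphDeg, Set.ncard_eq_zero (hlf a)] at h
  have : b ∈ G.neighborSet a := hab
  rw [h] at this
  exact Set.notMem_empty b this

lemma deg_mul_step (hlf : ∀ v : V, (G.neighborSet v).Finite) (a b : V) :
    (graphDeg G a : ℝ≥0∞) * stepProb G a b = if G.Adj a b then 1 else 0 := by
  unfold stepProb
  split
  · exact ENNReal.mul_inv_cancel (by exact_mod_cast graphDeg_ne_zero hlf ‹G.Adj a b›)
      (by simp)
  · simp

lemma reverse_path_prod (hlf : ∀ v : V, (G.neighborSet v).Finite) (p : ℤ → V) :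
    ∀ N : ℕ,
      (graphDeg G (p (N : ℤ)) : ℝ≥0∞) *
          ∏ i ∈ Finset.range N, stepProb G (p ((i : ℤ) + 1)) (p (i : ℤ))
        = (graphDeg G (p 0) : ℝ≥0∞) *
            ∏ i ∈ Finset.range N, stepProb G (p (i : ℤ)) (p ((i : ℤ) + 1)) := by
  intro N
  induction N with
  | zero => simp
  | succ N ih =>
    rw [Finset.prod_range_succ, Finset.prod_range_succ]
    have hcast : ((N + 1 : ℕ) : ℤ) = (N : ℤ) + 1 := by push_cast; ring
    rw [hcast]
    calc (graphDeg G (p ((N:ℤ)+1)) : ℝ≥0∞) *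
          ((∏ i ∈ Finset.range N, stepProb G (p ((i : ℤ) + 1)) (p (i : ℤ))) *
            stepProb G (p ((N:ℤ)+1)) (p (N:ℤ)))
        = ((graphDeg G (p ((N:ℤ)+1)) : ℝ≥0∞) * stepProb G (p ((N:ℤ)+1)) (p (N:ℤ))) *
            ∏ i ∈ Finset.range N, stepProb G (p ((i : ℤ) + 1)) (p (i : ℤ)) := by ring
      _ = ((graphDeg G (p (N:ℤ)) : ℝ≥0∞) * stepProb G (p (N:ℤ)) (p ((N:ℤ)+1))) *
            ∏ i ∈ Finset.range N, stepProb G (p ((i : ℤ) + 1)) (p (i : ℤ)) := by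
          rw [deg_mul_step hlf, deg_mul_step hlf]
          congr 1
          simp [G.adj_comm]
      _ = stepProb G (p (N:ℤ)) (p ((N:ℤ)+1)) *
            ((graphDeg G (p (N:ℤ)) : ℝ≥0∞) *
              ∏ i ∈ Finset.range N, stepProb G (p ((i : ℤ) + 1)) (p (i : ℤ))) := by ring
      _ = stepProb G (p (N:ℤ)) (p ((N:ℤ)+1)) *
            ((graphDeg G (p 0) : ℝ≥0∞) *
              ∏ i ∈ Finset.range N, stepProb G (p (i : ℤ)) (p ((i : ℤ) + 1))) := by rw [ih]
      _ = (graphDeg G (p 0) : ℝ≥0∞) *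
            ((∏ i ∈ Finset.range N, stepProb G (p (i : ℤ)) (p ((i : ℤ) + 1))) *
              stepProb G (p (N:ℤ)) (p ((N:ℤ)+1))) := by ring

end Aux
section Decomp

variable {V : Type*}

/-- Pairs of doubly-infinite paths that are "truncated": equal to a default vertex `o'`
outside the windows `[-a,b]` (first component) and `[-c,d]` (second component). -/
def FixPair (a b c d : ℕ) (o' : V) : Set ((ℤ → V) × (ℤ → V)) :=
  {z | (∀ i : ℤ, (i < -(a : ℤ) ∨ (b : ℤ) < i) → z.1 i = o') ∧
       (∀ j : ℤ, (j < -(c : ℤ) ∨ (d : ℤ) < j) → z.2 j = o')}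

instance fixPair_countable [Countable V] (a b c d : ℕ) (o' : V) :
    Countable (FixPair a b c d o') := by
  haveI : Finite (Set.Icc (-(a:ℤ)) (b:ℤ)) := (Set.finite_Icc _ _).to_subtype
  haveI : Finite (Set.Icc (-(c:ℤ)) (d:ℤ)) := (Set.finite_Icc _ _).to_subtype
  have key : ∀ z w : FixPair a b c d o',
      ((fun i : Set.Icc (-(a:ℤ)) (b:ℤ) => z.val.1 i.val) = fun i => w.val.1 i.val) →
      ((fun j : Set.Icc (-(c:ℤ)) (d:ℤ) => z.val.2 j.val) = fun j => w.val.2 j.val) →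
      z = w := by
    intro z w h1 h2
    apply Subtype.ext
    apply Prod.ext
    · funext i
      by_cases hi : -(a:ℤ) ≤ i ∧ i ≤ b
      · exact congrFun h1 ⟨i, hi⟩
      · rw [z.2.1 i (by omega), w.2.1 i (by omega)]
    · funext j
      by_cases hj : -(c:ℤ) ≤ j ∧ j ≤ d
      · exact congrFun h2 ⟨j, hj⟩
      · rw [z.2.2 j (by omega), w.2.2 j (by omega)]
  exact Function.Injective.countable
    (f := fun z : FixPair a b c d o' =>
      ((fun i : Set.Icc (-(a:ℤ)) (b:ℤ) => z.val.1 i.val,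
        fun j : Set.Icc (-(c:ℤ)) (d:ℤ) => z.val.2 j.val) :
        (Set.Icc (-(a:ℤ)) (b:ℤ) → V) × (Set.Icc (-(c:ℤ)) (d:ℤ) → V)))
    (fun z w h => key z w (congrArg Prod.fst h) (congrArg Prod.snd h))

variable [Countable V] [MeasurableSpace V] [DiscreteMeasurableSpace V]

lemma measurable_cylPair (a b c d : ℕ) (x y : ℤ → V) :
    MeasurableSet {ω : (ℤ → V) × (ℤ → V) |
      (∀ i : ℤ, -(a : ℤ) ≤ i → i ≤ (b : ℤ) → ω.1 i = x i) ∧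
      (∀ j : ℤ, -(c : ℤ) ≤ j → j ≤ (d : ℤ) → ω.2 j = y j)} := by
  have h1 : {ω : (ℤ → V) × (ℤ → V) |
      (∀ i : ℤ, -(a : ℤ) ≤ i → i ≤ (b : ℤ) → ω.1 i = x i) ∧
      (∀ j : ℤ, -(c : ℤ) ≤ j → j ≤ (d : ℤ) → ω.2 j = y j)}
      = (⋂ i : ℤ, {ω : (ℤ → V) × (ℤ → V) | -(a : ℤ) ≤ i → i ≤ (b : ℤ) → ω.1 i = x i}) ∩
        (⋂ j : ℤ, {ω : (ℤ → V) × (ℤ → V) | -(c : ℤ) ≤ j → j ≤ (d : ℤ) → ω.2 j = y j}) := by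
    ext ω; simp [Set.mem_iInter]
  rw [h1]
  apply MeasurableSet.inter
  · refine MeasurableSet.iInter fun i => ?_
    by_cases hi : -(a:ℤ) ≤ i ∧ i ≤ (b:ℤ)
    · have : {ω : (ℤ → V) × (ℤ → V) | -(a : ℤ) ≤ i → i ≤ (b : ℤ) → ω.1 i = x i}
          = (fun ω : (ℤ → V) × (ℤ → V) => ω.1 i) ⁻¹' {x i} := by
        ext ω; simp [hi.1, hi.2]
      rw [this]
      exact ((measurable_pi_apply i).comp measurable_fst) (measurableSet_singleton _)
    · have : {ω : (ℤ → V) × (ℤ → V) | -(a : ℤ) ≤ i → i ≤ (b : ℤ) → ω.1 i = x i}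
          = Set.univ := by
        ext ω; simp only [Set.mem_setOf_eq, Set.mem_univ, iff_true]
        intro h1' h2'; exact absurd ⟨h1', h2'⟩ hi
      rw [this]; exact MeasurableSet.univ
  · refine MeasurableSet.iInter fun j => ?_
    by_cases hj : -(c:ℤ) ≤ j ∧ j ≤ (d:ℤ)
    · have : {ω : (ℤ → V) × (ℤ → V) | -(c : ℤ) ≤ j → j ≤ (d : ℤ) → ω.2 j = y j}
          = (fun ω : (ℤ → V) × (ℤ → V) => ω.2 j) ⁻¹' {y j} := by
        ext ω; simp [hj.1, hj.2]
      rw [this]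
      exact ((measurable_pi_apply j).comp measurable_snd) (measurableSet_singleton _)
    · have : {ω : (ℤ → V) × (ℤ → V) | -(c : ℤ) ≤ j → j ≤ (d : ℤ) → ω.2 j = y j}
          = Set.univ := by
        ext ω; simp only [Set.mem_setOf_eq, Set.mem_univ, iff_true]
        intro h1' h2'; exact absurd ⟨h1', h2'⟩ hj
      rw [this]; exact MeasurableSet.univ

/-- Window decomposition: the measure of any event determined by the coordinates in the
windows `[-a,b]` (first walk) and `[-c,d]` (second walk) is the sum of its cylinder
probabilities. -/
lemma double_walk_window_decomp {G : SimpleGraph V} {u v : V}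
    {μ : Measure ((ℤ → V) × (ℤ → V))} (hμ : IsDoubleWalkLaw G u v μ) (o' : V)
    (a b c d : ℕ) (S : Set ((ℤ → V) × (ℤ → V)))
    (hS : ∀ ω ω' : (ℤ → V) × (ℤ → V),
      (∀ i : ℤ, -(a : ℤ) ≤ i → i ≤ (b : ℤ) → ω.1 i = ω'.1 i) →
      (∀ j : ℤ, -(c : ℤ) ≤ j → j ≤ (d : ℤ) → ω.2 j = ω'.2 j) → ω ∈ S → ω' ∈ S) :
    μ S = ∑' z : FixPair a b c d o',
      (if z.val ∈ S then 1 else 0) *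
        (walkCylWeight G u a b z.val.1 * walkCylWeight G v c d z.val.2) := by
  classical
  set Cyl : FixPair a b c d o' → Set ((ℤ → V) × (ℤ → V)) := fun z =>
    {ω | (∀ i : ℤ, -(a : ℤ) ≤ i → i ≤ (b : ℤ) → ω.1 i = z.val.1 i) ∧
         (∀ j : ℤ, -(c : ℤ) ≤ j → j ≤ (d : ℤ) → ω.2 j = z.val.2 j)} with hCyl
  set f : FixPair a b c d o' → Set ((ℤ → V) × (ℤ → V)) := fun z =>
    if z.val ∈ S then Cyl z else ∅ with hf
  have hdisj : Pairwise (Function.onFun Disjoint f) := by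
    intro z w hzw
    simp only [Function.onFun, hf]
    split <;> [skip; simp]
    split <;> [skip; simp]
    rw [Set.disjoint_left]
    intro ω hω hω'
    apply hzw
    apply Subtype.ext
    apply Prod.ext
    · funext i
      by_cases hi : -(a:ℤ) ≤ i ∧ i ≤ (b:ℤ)
      · rw [← hω.1 i hi.1 hi.2, hω'.1 i hi.1 hi.2]
      · rw [z.2.1 i (by omega), w.2.1 i (by omega)]
    · funext j
      by_cases hj : -(c:ℤ) ≤ j ∧ j ≤ (d:ℤ)
      · rw [← hω.2 j hj.1 hj.2, hω'.2 j hj.1 hj.2]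
      · rw [z.2.2 j (by omega), w.2.2 j (by omega)]
  have hmeas : ∀ z, MeasurableSet (f z) := by
    intro z
    simp only [hf]
    split
    · exact measurable_cylPair a b c d z.val.1 z.val.2
    · exact MeasurableSet.empty
  have hunion : (⋃ z, f z) = S := by
    ext ω
    constructor
    · rintro ⟨_, ⟨z, rfl⟩, hω⟩
      simp only [hf] at hω
      split at hω
      · exact hS z.val ω (fun i h1 h2 => (hω.1 i h1 h2).symm)
          (fun j h1 h2 => (hω.2 j h1 h2).symm) ‹_›
      · exact absurd hω (Set.notMem_empty ω)
    · intro hω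
      set z1 : ℤ → V := fun i => if -(a:ℤ) ≤ i ∧ i ≤ (b:ℤ) then ω.1 i else o' with hz1
      set z2 : ℤ → V := fun j => if -(c:ℤ) ≤ j ∧ j ≤ (d:ℤ) then ω.2 j else o' with hz2
      have hzmem : (z1, z2) ∈ FixPair a b c d o' := by
        constructor
        · intro i hi; simp only [hz1]; rw [if_neg (by omega)]
        · intro j hj; simp only [hz2]; rw [if_neg (by omega)]
      have hzS : (z1, z2) ∈ S := by
        apply hS ω (z1, z2)
        · intro i h1 h2; simp only [hz1]; rw [if_pos ⟨h1, h2⟩]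
        · intro j h1 h2; simp only [hz2]; rw [if_pos ⟨h1, h2⟩]
        · exact hω
      refine Set.mem_iUnion.mpr ⟨⟨(z1, z2), hzmem⟩, ?_⟩
      simp only [hf, if_pos hzS]
      constructor
      · intro i h1 h2; simp only [hz1]; rw [if_pos ⟨h1, h2⟩]
      · intro j h1 h2; simp only [hz2]; rw [if_pos ⟨h1, h2⟩]
  calc μ S = μ (⋃ z, f z) := by rw [hunion]
    _ = ∑' z, μ (f z) := measure_iUnion hdisj hmeas
    _ = _ := by
        apply tsum_congr
        intro z
        simp only [hf]
        split
        · rw [one_mul, hCyl]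
          exact hμ.2 a b c d z.val.1 z.val.2
        · simp

end Decomp
section Events

variable {V : Type*}

/-- Truncated non-intersection condition for the pair of walks, relative to the lex-max
time `(n,m)` and window size `k`. -/
def Ncond (n m k : ℕ) (ω : (ℤ → V) × (ℤ → V)) : Prop :=
  (∀ i : ℤ, (n : ℤ) ≤ i → i ≤ (n : ℤ) + k → ∀ j : ℤ, (m : ℤ) < j → j ≤ (m : ℤ) + k →
      ω.1 i ≠ ω.2 j) ∧
  (∀ i : ℤ, (n : ℤ) < i → i ≤ (n : ℤ) + k → ∀ j : ℤ, (m : ℤ) - k ≤ j → j ≤ (m : ℤ) →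
      ω.1 i ≠ ω.2 j)

/-- The truncated version of the lex-max event. -/
def Ek (n m k : ℕ) : Set ((ℤ → V) × (ℤ → V)) :=
  {ω | ω.1 (n : ℤ) = ω.2 (m : ℤ) ∧ Ncond n m k ω}

/-- The truncated version of the time-reversed event. -/
def Fk (n m k : ℕ) (o : V) : Set ((ℤ → V) × (ℤ → V)) :=
  {ω | ω.1 (-(n : ℤ)) = o ∧ ω.2 (-(m : ℤ)) = o ∧
    (∀ i : ℤ, 0 ≤ i → i ≤ (k : ℤ) → ∀ j : ℤ, 0 < j → j ≤ (k : ℤ) → ω.1 i ≠ ω.2 j) ∧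
    (∀ i : ℤ, 0 < i → i ≤ (k : ℤ) → ∀ j : ℤ, -(k : ℤ) ≤ j → j ≤ 0 → ω.1 i ≠ ω.2 j)}

/-- Shift the first walk by `n` and the second by `m`. -/
def shiftPair (n m : ℕ) (ω : (ℤ → V) × (ℤ → V)) : (ℤ → V) × (ℤ → V) :=
  (fun i => ω.1 (i + n), fun j => ω.2 (j + m))

lemma mem_Fk_shift (n m k : ℕ) (o : V) (ω : (ℤ → V) × (ℤ → V)) :
    shiftPair n m ω ∈ Fk n m k o ↔ (ω.1 0 = o ∧ ω.2 0 = o ∧ Ncond n m k ω) := by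
  simp only [Fk, shiftPair, Set.mem_setOf_eq, Ncond]
  constructor
  · rintro ⟨h1, h2, h3, h4⟩
    refine ⟨by simpa using h1, by simpa using h2, ?_, ?_⟩
    · intro i hi1 hi2 j hj1 hj2
      have := h3 (i - n) (by omega) (by omega) (j - m) (by omega) (by omega)
      simpa [sub_add_cancel] using this
    · intro i hi1 hi2 j hj1 hj2
      have := h4 (i - n) (by omega) (by omega) (j - m) (by omega) (by omega)
      simpa [sub_add_cancel] using this
  · rintro ⟨h1, h2, ⟨h3, h4⟩⟩
    refine ⟨by simpa using h1, by simpa using h2, ?_, ?_⟩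
    · intro i hi1 hi2 j hj1 hj2
      exact h3 (i + n) (by omega) (by omega) (j + m) (by omega) (by omega)
    · intro i hi1 hi2 j hj1 hj2
      exact h4 (i + n) (by omega) (by omega) (j + m) (by omega) (by omega)

variable [Countable V] [MeasurableSpace V] [DiscreteMeasurableSpace V]

lemma measurableSet_eval_eq (i j : ℤ) :
    MeasurableSet {ω : (ℤ → V) × (ℤ → V) | ω.1 i = ω.2 j} := by
  have : {ω : (ℤ → V) × (ℤ → V) | ω.1 i = ω.2 j}
      = ⋃ v : V, ((fun ω : (ℤ → V) × (ℤ → V) => ω.1 i) ⁻¹' {v}) ∩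
          ((fun ω : (ℤ → V) × (ℤ → V) => ω.2 j) ⁻¹' {v}) := by
    ext ω; simp only [Set.mem_setOf_eq, Set.mem_iUnion, Set.mem_inter_iff,
      Set.mem_preimage, Set.mem_singleton_iff]
    exact ⟨fun h => ⟨ω.2 j, h, rfl⟩, fun ⟨v, h1, h2⟩ => h1.trans h2.symm⟩
  rw [this]
  exact MeasurableSet.iUnion fun v =>
    (((measurable_pi_apply i).comp measurable_fst) (measurableSet_singleton _)).inter
      (((measurable_pi_apply j).comp measurable_snd) (measurableSet_singleton _))

lemma measurableSet_forall_ne (P Q : ℤ → ℤ → Prop) :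
    MeasurableSet {ω : (ℤ → V) × (ℤ → V) | ∀ i j : ℤ, P i j → Q i j → ω.1 i ≠ ω.2 j} := by
  classical
  have : {ω : (ℤ → V) × (ℤ → V) | ∀ i j : ℤ, P i j → Q i j → ω.1 i ≠ ω.2 j}
      = ⋂ i : ℤ, ⋂ j : ℤ,
          (if P i j ∧ Q i j then {ω : (ℤ → V) × (ℤ → V) | ω.1 i = ω.2 j}ᶜ else Set.univ) := by
    ext ω
    simp only [Set.mem_setOf_eq, Set.mem_iInter]
    constructor
    · intro h i j
      split
    
      · exact h i j ‹P i j ∧ Q i j›.1 ‹P i j ∧ Q i j›.2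
      · trivial
    · intro h i j hP hQ
      have := h i j
      rw [if_pos ⟨hP, hQ⟩] at this
      exact this
  rw [this]
  refine MeasurableSet.iInter fun i => MeasurableSet.iInter fun j => ?_
  split
  · exact (measurableSet_eval_eq i j).compl
  · exact MeasurableSet.univ

lemma measurableSet_eval_eq_const (i : ℤ) (c : V) :
    MeasurableSet {ω : (ℤ → V) × (ℤ → V) | ω.1 i = c} :=
  ((measurable_pi_apply i).comp measurable_fst) (measurableSet_singleton _)

lemma measurableSet_eval_eq_const' (j : ℤ) (c : V) :
    MeasurableSet {ω : (ℤ → V) × (ℤ → V) | ω.2 j = c} :=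
  ((measurable_pi_apply j).comp measurable_snd) (measurableSet_singleton _)

lemma measurableSet_Ek (n m k : ℕ) :
    MeasurableSet (Ek n m k : Set ((ℤ → V) × (ℤ → V))) := by
  have : (Ek n m k : Set ((ℤ → V) × (ℤ → V)))
      = {ω : (ℤ → V) × (ℤ → V) | ω.1 (n:ℤ) = ω.2 (m:ℤ)} ∩
        ({ω : (ℤ → V) × (ℤ → V) | ∀ i j : ℤ,
            ((n:ℤ) ≤ i ∧ i ≤ (n:ℤ) + k) → ((m:ℤ) < j ∧ j ≤ (m:ℤ) + k) → ω.1 i ≠ ω.2 j} ∩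
         {ω : (ℤ → V) × (ℤ → V) | ∀ i j : ℤ,
            ((n:ℤ) < i ∧ i ≤ (n:ℤ) + k) → ((m:ℤ) - k ≤ j ∧ j ≤ (m:ℤ)) → ω.1 i ≠ ω.2 j}) := by
    ext ω
    simp only [Ek, Ncond, Set.mem_setOf_eq, Set.mem_inter_iff]
    constructor
    · rintro ⟨h1, h2, h3⟩
      exact ⟨h1, fun i j hi hj => h2 i hi.1 hi.2 j hj.1 hj.2,
        fun i j hi hj => h3 i hi.1 hi.2 j hj.1 hj.2⟩
    · rintro ⟨h1, h2, h3⟩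
      exact ⟨h1, fun i hi1 hi2 j hj1 hj2 => h2 i j ⟨hi1, hi2⟩ ⟨hj1, hj2⟩,
        fun i hi1 hi2 j hj1 hj2 => h3 i j ⟨hi1, hi2⟩ ⟨hj1, hj2⟩⟩
  rw [this]
  exact (measurableSet_eval_eq _ _).inter
    ((measurableSet_forall_ne _ _).inter (measurableSet_forall_ne _ _))

lemma measurableSet_Fk (n m k : ℕ) (o : V) :
    MeasurableSet (Fk n m k o : Set ((ℤ → V) × (ℤ → V))) := by
  have : (Fk n m k o : Set ((ℤ → V) × (ℤ → V)))
      = {ω : (ℤ → V) × (ℤ → V) | ω.1 (-(n:ℤ)) = o} ∩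
        ({ω : (ℤ → V) × (ℤ → V) | ω.2 (-(m:ℤ)) = o} ∩
         ({ω : (ℤ → V) × (ℤ → V) | ∀ i j : ℤ,
             (0 ≤ i ∧ i ≤ (k:ℤ)) → (0 < j ∧ j ≤ (k:ℤ)) → ω.1 i ≠ ω.2 j} ∩
          {ω : (ℤ → V) × (ℤ → V) | ∀ i j : ℤ,
             (0 < i ∧ i ≤ (k:ℤ)) → (-(k:ℤ) ≤ j ∧ j ≤ 0) → ω.1 i ≠ ω.2 j})) := by
    ext ω
    simp only [Fk, Set.mem_setOf_eq, Set.mem_inter_iff]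
    constructor
    · rintro ⟨h1, h2, h3, h4⟩
      exact ⟨h1, h2, fun i j hi hj => h3 i hi.1 hi.2 j hj.1 hj.2,
        fun i j hi hj => h4 i hi.1 hi.2 j hj.1 hj.2⟩
    · rintro ⟨h1, h2, h3, h4⟩
      exact ⟨h1, h2, fun i hi1 hi2 j hj1 hj2 => h3 i j ⟨hi1, hi2⟩ ⟨hj1, hj2⟩,
        fun i hi1 hi2 j hj1 hj2 => h4 i j ⟨hi1, hi2⟩ ⟨hj1, hj2⟩⟩
  rw [this]
  exact (measurableSet_eval_eq_const _ _).inter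
    ((measurableSet_eval_eq_const' _ _).inter
      ((measurableSet_forall_ne _ _).inter (measurableSet_forall_ne _ _)))

end Events
section Core

variable {V : Type*}

lemma step_congr {G : SimpleGraph V} (z : ℤ → V) {a b a' b' : ℤ}
    (ha : a = a') (hb : b = b') : stepProb G (z a) (z b) = stepProb G (z a') (z b') := by
  rw [ha, hb]

lemma core_pointwise {G : SimpleGraph V} (hlf : ∀ v : V, (G.neighborSet v).Finite)
    (o : V) (hdego : graphDeg G o ≠ 0) (n m k : ℕ) (z : (ℤ → V) × (ℤ → V)) :
    ((graphDeg G (z.1 (n : ℤ)) : ℝ≥0∞) ^ 2 / (graphDeg G o : ℝ≥0∞) ^ 2) *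
      ((if shiftPair n m z ∈ Fk n m k o then 1 else 0) *
        (walkCylWeight G (z.1 (n : ℤ)) n k (shiftPair n m z).1 *
          walkCylWeight G (z.1 (n : ℤ)) (m + k) k (shiftPair n m z).2))
    = (if z ∈ Ek n m k then 1 else 0) *
        (walkCylWeight G o 0 (n + k) z.1 * walkCylWeight G o k (m + k) z.2) := by
  classical
  by_cases hN : Ncond n m k z
  swap
  · rw [if_neg (by rw [mem_Fk_shift]; tauto),
      if_neg (fun h => hN (h : z ∈ Ek n m k).2)]
    ring
  by_cases h1 : z.1 0 = o
  swap
  · rw [if_neg (by rw [mem_Fk_shift]; tauto)]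
    have hz : walkCylWeight G o 0 (n + k) z.1 = 0 := by
      rw [walkCylWeight, if_neg h1]; ring
    rw [hz]; ring
  by_cases h2 : z.2 0 = o
  swap
  · rw [if_neg (by rw [mem_Fk_shift]; tauto)]
    have hz : walkCylWeight G o k (m + k) z.2 = 0 := by
      rw [walkCylWeight, if_neg h2]; ring
    rw [hz]; ring
  by_cases h3 : z.1 (n : ℤ) = z.2 (m : ℤ)
  swap
  · rw [if_neg (fun h => h3 (h : z ∈ Ek n m k).1)]
    have hz : walkCylWeight G (z.1 (n : ℤ)) (m + k) k (shiftPair n m z).2 = 0 := by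
      rw [walkCylWeight, if_neg (by simpa [shiftPair] using fun h => h3 h.symm)]; ring
    rw [hz]; ring
  rw [if_pos ((mem_Fk_shift n m k o z).mpr ⟨h1, h2, hN⟩), if_pos (show z ∈ Ek n m k from ⟨h3, hN⟩)]
  -- abbreviations for the various products
  set A : ℝ≥0∞ := ∏ i ∈ Finset.range k,
    stepProb G (z.1 ((i : ℤ) + (n : ℤ))) (z.1 ((i : ℤ) + 1 + (n : ℤ))) with hA
  set Rx : ℝ≥0∞ := ∏ i ∈ Finset.range n,
    stepProb G (z.1 ((i : ℤ) + 1)) (z.1 (i : ℤ)) with hRx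
  set Fx : ℝ≥0∞ := ∏ i ∈ Finset.range n,
    stepProb G (z.1 (i : ℤ)) (z.1 ((i : ℤ) + 1)) with hFx
  set B : ℝ≥0∞ := ∏ j ∈ Finset.range k,
    stepProb G (z.2 ((j : ℤ) + (m : ℤ))) (z.2 ((j : ℤ) + 1 + (m : ℤ))) with hB
  set Ry : ℝ≥0∞ := ∏ j ∈ Finset.range m,
    stepProb G (z.2 ((j : ℤ) + 1)) (z.2 (j : ℤ)) with hRy
  set Fy : ℝ≥0∞ := ∏ j ∈ Finset.range m,
    stepProb G (z.2 (j : ℤ)) (z.2 ((j : ℤ) + 1)) with hFy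
  set bY : ℝ≥0∞ := ∏ j ∈ Finset.range k,
    stepProb G (z.2 (-(j : ℤ))) (z.2 (-(j : ℤ) - 1)) with hbY
  have e1 : walkCylWeight G (z.1 (n : ℤ)) n k (shiftPair n m z).1 = A * Rx := by
    rw [walkCylWeight]
    simp only [shiftPair]
    simp only [zero_add, ite_true, one_mul]
    congr 1
    rw [hRx, ← Finset.prod_range_reflect (fun i => stepProb G (z.1 ((i:ℤ)+1)) (z.1 (i:ℤ))) n]
    refine Finset.prod_congr rfl fun i hi => ?_
    have hi' := Finset.mem_range.mp hi
    exact step_congr z.1 (by omega) (by omega)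
  have e2 : walkCylWeight G (z.1 (n : ℤ)) (m + k) k (shiftPair n m z).2
      = B * (Ry * bY) := by
    rw [walkCylWeight]
    simp only [shiftPair]
    simp only [zero_add, h3, ite_true, one_mul]
    congr 1
    rw [Finset.prod_range_add]
    congr 1
    · rw [hRy, ← Finset.prod_range_reflect
        (fun j => stepProb G (z.2 ((j:ℤ)+1)) (z.2 (j:ℤ))) m]
      refine Finset.prod_congr rfl fun j hj => ?_
      have hj' := Finset.mem_range.mp hj
      exact step_congr z.2 (by omega) (by omega)
    · refine Finset.prod_congr rfl fun j hj => ?_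
      exact step_congr z.2 (by push_cast; ring) (by push_cast; ring)
  have e3 : walkCylWeight G o 0 (n + k) z.1 = Fx * A := by
    rw [walkCylWeight, if_pos h1, one_mul]
    rw [Finset.range_zero, Finset.prod_empty, mul_one]
    rw [Finset.prod_range_add]
    congr 1
    refine Finset.prod_congr rfl fun i _ => ?_
    exact step_congr z.1 (by push_cast; ring) (by push_cast; ring)
  have e4 : walkCylWeight G o k (m + k) z.2 = (Fy * B) * bY := by
    rw [walkCylWeight, if_pos h2, one_mul]
    congr 1
    rw [Finset.prod_range_add]
    congr 1
    refine Finset.prod_congr rfl fun j _ => ?_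
    exact step_congr z.2 (by push_cast; ring) (by push_cast; ring)
  rw [e1, e2, e3, e4, one_mul, one_mul]
  -- reversibility
  have hX : (graphDeg G (z.1 (n : ℤ)) : ℝ≥0∞) * Rx = (graphDeg G o : ℝ≥0∞) * Fx := by
    have := reverse_path_prod hlf z.1 n
    rw [h1] at this
    exact this
  have hY : (graphDeg G (z.1 (n : ℤ)) : ℝ≥0∞) * Ry = (graphDeg G o : ℝ≥0∞) * Fy := by
    have := reverse_path_prod hlf z.2 m
    rw [h2, ← h3] at this
    exact this
  have hdo0 : ((graphDeg G o : ℝ≥0∞)) ^ 2 ≠ 0 := by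
    apply pow_ne_zero
    exact_mod_cast hdego
  have hdoT : ((graphDeg G o : ℝ≥0∞)) ^ 2 ≠ ⊤ := by
    apply ENNReal.pow_ne_top
    exact ENNReal.natCast_ne_top _
  set dv : ℝ≥0∞ := (graphDeg G (z.1 (n : ℤ)) : ℝ≥0∞) with hdv
  set dO : ℝ≥0∞ := (graphDeg G o : ℝ≥0∞) with hdO
  calc dv ^ 2 / dO ^ 2 * (A * Rx * (B * (Ry * bY)))
      = (dv * Rx) * (dv * Ry) * (A * B * bY) * (dO ^ 2)⁻¹ := by
        rw [div_eq_mul_inv]; ring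
    _ = (dO * Fx) * (dO * Fy) * (A * B * bY) * (dO ^ 2)⁻¹ := by rw [hX, hY]
    _ = (Fx * A * (Fy * B * bY)) * (dO ^ 2 * (dO ^ 2)⁻¹) := by ring
    _ = Fx * A * (Fy * B * bY) := by rw [ENNReal.mul_inv_cancel hdo0 hdoT, mul_one]

end Core
section PerK

variable {V : Type*}

/-- The shift bijection between truncated configurations for the lex-max event and for the
time-reversed event. -/
def shiftEquiv (n m k : ℕ) (o : V) :
    FixPair 0 (n + k) k (m + k) o ≃ FixPair n k (m + k) k (o : V) where
  toFun z := ⟨shiftPair n m z.val, by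
    obtain ⟨hz1, hz2⟩ := z.2
    exact ⟨fun i hi => hz1 (i + n) (by omega), fun j hj => hz2 (j + m) (by omega)⟩⟩
  invFun w := ⟨(fun i => w.val.1 (i - n), fun j => w.val.2 (j - m)), by
    obtain ⟨hw1, hw2⟩ := w.2
    exact ⟨fun i hi => hw1 (i - n) (by omega), fun j hj => hw2 (j - m) (by omega)⟩⟩
  left_inv z := by
    apply Subtype.ext
    apply Prod.ext
    · funext t; show z.val.1 (t - n + n) = z.val.1 t; rw [show t - (n:ℤ) + n = t by omega]
    · funext t; show z.val.2 (t - m + m) = z.val.2 t; rw [show t - (m:ℤ) + m = t by omega]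
  right_inv w := by
    apply Subtype.ext
    apply Prod.ext
    · funext t; show w.val.1 (t + n - n) = w.val.1 t; rw [show t + (n:ℤ) - n = t by omega]
    · funext t; show w.val.2 (t + m - m) = w.val.2 t; rw [show t + (m:ℤ) - m = t by omega]

variable {G : SimpleGraph V}

lemma core_pointwise' (hlf : ∀ v : V, (G.neighborSet v).Finite)
    (o : V) (hdego : graphDeg G o ≠ 0) (n m k : ℕ) (z : (ℤ → V) × (ℤ → V)) :
    ((graphDeg G ((shiftPair n m z).1 0) : ℝ≥0∞) ^ 2 / (graphDeg G o : ℝ≥0∞) ^ 2) *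
      ((if shiftPair n m z ∈ Fk n m k o then 1 else 0) *
        (walkCylWeight G ((shiftPair n m z).1 0) n k (shiftPair n m z).1 *
          walkCylWeight G ((shiftPair n m z).1 0) (m + k) k (shiftPair n m z).2))
    = (if z ∈ Ek n m k then 1 else 0) *
        (walkCylWeight G o 0 (n + k) z.1 * walkCylWeight G o k (m + k) z.2) := by
  have h0 : (shiftPair n m z).1 0 = z.1 (n : ℤ) := by
    show z.1 (0 + n) = z.1 (n : ℤ); rw [zero_add]
  rw [h0]
  exact core_pointwise hlf o hdego n m k z

variable [Countable V] [MeasurableSpace V] [DiscreteMeasurableSpace V]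

lemma per_k (hlf : ∀ v : V, (G.neighborSet v).Finite) (o : V)
    (hdego : graphDeg G o ≠ 0)
    {μ : Measure ((ℤ → V) × (ℤ → V))} (hμ : IsDoubleWalkLaw G o o μ)
    {ν : V → Measure ((ℤ → V) × (ℤ → V))} (hν : ∀ v, IsDoubleWalkLaw G v v (ν v))
    (n m k : ℕ) :
    μ (Ek n m k) = ∑' v : V,
      ((graphDeg G v : ℝ≥0∞) ^ 2 / (graphDeg G o : ℝ≥0∞) ^ 2) * ν v (Fk n m k o) := by
  classical
  have hSE : ∀ ω ω' : (ℤ → V) × (ℤ → V),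
      (∀ i : ℤ, -((0:ℕ) : ℤ) ≤ i → i ≤ ((n + k : ℕ) : ℤ) → ω.1 i = ω'.1 i) →
      (∀ j : ℤ, -((k:ℕ) : ℤ) ≤ j → j ≤ ((m + k : ℕ) : ℤ) → ω.2 j = ω'.2 j) →
      ω ∈ Ek n m k → ω' ∈ Ek n m k := by
    intro ω ω' hx hy hω
    refine ⟨?_, ?_, ?_⟩
    · rw [← hx (n : ℤ) (by omega) (by push_cast; omega),
        ← hy (m : ℤ) (by push_cast; omega) (by push_cast; omega)]
      exact hω.1
    · intro i hi1 hi2 j hj1 hj2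
      rw [← hx i (by omega) (by push_cast; omega),
        ← hy j (by push_cast; omega) (by push_cast; omega)]
      exact hω.2.1 i hi1 hi2 j hj1 hj2
    · intro i hi1 hi2 j hj1 hj2
      rw [← hx i (by omega) (by push_cast; omega),
        ← hy j (by push_cast; omega) (by push_cast; omega)]
      exact hω.2.2 i hi1 hi2 j hj1 hj2
  have hSF : ∀ ω ω' : (ℤ → V) × (ℤ → V),
      (∀ i : ℤ, -((n:ℕ) : ℤ) ≤ i → i ≤ ((k:ℕ) : ℤ) → ω.1 i = ω'.1 i) →
      (∀ j : ℤ, -((m + k : ℕ) : ℤ) ≤ j → j ≤ ((k:ℕ) : ℤ) → ω.2 j = ω'.2 j) →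
      ω ∈ Fk n m k o → ω' ∈ Fk n m k o := by
    intro ω ω' hx hy hω
    refine ⟨?_, ?_, ?_, ?_⟩
    · rw [← hx (-(n:ℤ)) (by omega) (by omega)]; exact hω.1
    · rw [← hy (-(m:ℤ)) (by push_cast; omega) (by omega)]; exact hω.2.1
    · intro i hi1 hi2 j hj1 hj2
      rw [← hx i (by omega) (by omega), ← hy j (by push_cast; omega) (by omega)]
      exact hω.2.2.1 i hi1 hi2 j hj1 hj2
    · intro i hi1 hi2 j hj1 hj2
      rw [← hx i (by omega) (by omega), ← hy j (by push_cast; omega) (by omega)]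
      exact hω.2.2.2 i hi1 hi2 j hj1 hj2
  rw [double_walk_window_decomp hμ o 0 (n + k) k (m + k) (Ek n m k) hSE]
  have hι : ∀ v : V, ν v (Fk n m k o) = ∑' w : FixPair n k (m + k) k (o : V),
      (if w.val ∈ Fk n m k o then 1 else 0) *
        (walkCylWeight G v n k w.val.1 * walkCylWeight G v (m + k) k w.val.2) :=
    fun v => double_walk_window_decomp (hν v) o n k (m + k) k (Fk n m k o) hSF
  set g : FixPair n k (m + k) k (o : V) → ℝ≥0∞ := fun w =>
    ((graphDeg G (w.val.1 0) : ℝ≥0∞) ^ 2 / (graphDeg G o : ℝ≥0∞) ^ 2) *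
      ((if w.val ∈ Fk n m k o then 1 else 0) *
        (walkCylWeight G (w.val.1 0) n k w.val.1 *
          walkCylWeight G (w.val.1 0) (m + k) k w.val.2)) with hg
  calc ∑' z : FixPair 0 (n + k) k (m + k) (o : V),
        (if z.val ∈ Ek n m k then 1 else 0) *
          (walkCylWeight G o 0 (n + k) z.val.1 * walkCylWeight G o k (m + k) z.val.2)
      = ∑' z : FixPair 0 (n + k) k (m + k) (o : V), g (shiftEquiv n m k o z) := by
        refine tsum_congr fun z => ?_
        exact (core_pointwise' hlf o hdego n m k z.val).symm
    _ = ∑' w : FixPair n k (m + k) k (o : V), g w := Equiv.tsum_eq (shiftEquiv n m k o) g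
    _ = ∑' w : FixPair n k (m + k) k (o : V), ∑' v : V,
          ((graphDeg G v : ℝ≥0∞) ^ 2 / (graphDeg G o : ℝ≥0∞) ^ 2) *
            ((if w.val ∈ Fk n m k o then 1 else 0) *
              (walkCylWeight G v n k w.val.1 * walkCylWeight G v (m + k) k w.val.2)) := by
        refine tsum_congr fun w => ?_
        rw [hg]
        refine Eq.symm (tsum_eq_single (w.val.1 0) ?_)
        intro v hv
        have hzero : walkCylWeight G v n k w.val.1 = 0 := by
          rw [walkCylWeight, if_neg (fun hh => hv hh.symm)]; ring
        rw [hzero]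
        ring
    _ = ∑' v : V, ∑' w : FixPair n k (m + k) k (o : V),
          ((graphDeg G v : ℝ≥0∞) ^ 2 / (graphDeg G o : ℝ≥0∞) ^ 2) *
            ((if w.val ∈ Fk n m k o then 1 else 0) *
              (walkCylWeight G v n k w.val.1 * walkCylWeight G v (m + k) k w.val.2)) :=
        ENNReal.tsum_comm
    _ = _ := by
        refine tsum_congr fun v => ?_
        rw [ENNReal.tsum_mul_left, ← hι v]

end PerK

/-- Lemma 4.3: time-reversal identity for the lex-max intersection.
Let `G` be a transient, connected, locally finite graph and `o` a vertex. For all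
`n, m ≥ 0`, the `P^G_{o,o}`-probability of the event that the lexicographic maximum of
`{(i,j) : X_i = Y_j}` exists and equals `(n,m)` equals
`∑_v (deg(v)²/deg(o)²) · P^G_{v,v}(X_{-n} = Y_{-m} = o, {X_i}_{i≥0} ∩ {Y_j}_{j>0} = ∅,
{X_i}_{i>0} ∩ {Y_j}_{j≤0} = ∅)`. -/
theorem lex_max_time_reversal_identity
    {V : Type*} [Countable V] [MeasurableSpace V] [DiscreteMeasurableSpace V]
    (G : SimpleGraph V) (hlf : ∀ v : V, (G.neighborSet v).Finite)
    (hconn : G.Connected) (htrans : Transient G) (o : V)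
    (μ : Measure ((ℤ → V) × (ℤ → V))) (hμ : IsDoubleWalkLaw G o o μ)
    (ν : V → Measure ((ℤ → V) × (ℤ → V))) (hν : ∀ v, IsDoubleWalkLaw G v v (ν v))
    (n m : ℕ) :
    μ {ω | ω.1 (n : ℤ) = ω.2 (m : ℤ) ∧
        (∀ i : ℤ, (n : ℤ) ≤ i → ∀ j : ℤ, (m : ℤ) < j → ω.1 i ≠ ω.2 j) ∧
        (∀ i : ℤ, (n : ℤ) < i → ∀ j : ℤ, j ≤ (m : ℤ) → ω.1 i ≠ ω.2 j)}
      = ∑' v : V, ((graphDeg G v : ℝ≥0∞) ^ 2 / (graphDeg G o : ℝ≥0∞) ^ 2) *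
          ν v {ω | ω.1 (-(n : ℤ)) = o ∧ ω.2 (-(m : ℤ)) = o ∧
            (∀ i : ℤ, 0 ≤ i → ∀ j : ℤ, 0 < j → ω.1 i ≠ ω.2 j) ∧
            (∀ i : ℤ, 0 < i → ∀ j : ℤ, j ≤ 0 → ω.1 i ≠ ω.2 j)} := by
  classical
  haveI : IsProbabilityMeasure μ := hμ.1
  -- the degree of `o` is nonzero (else `G` is a single point and `hμ` is contradictory)
  have hdego : graphDeg G o ≠ 0 := by
    intro h0
    have hnb : G.neighborSet o = ∅ := by
      rw [← Set.ncard_eq_zero (hlf o)]; exact h0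
    have hall : ∀ v : V, v = o := by
      intro v
      obtain ⟨w⟩ := hconn.preconnected o v
      cases w with
      | nil => rfl
      | cons h p =>
        exfalso
        have : _ ∈ G.neighborSet o := h
        rw [hnb] at this
        exact Set.notMem_empty _ this
    have h1 := hμ.2 0 1 0 0 (fun _ => o) (fun _ => o)
    have huniv : {ω : (ℤ → V) × (ℤ → V) |
        (∀ i : ℤ, -((0:ℕ) : ℤ) ≤ i → i ≤ ((1:ℕ) : ℤ) → ω.1 i = (fun _ => o) i) ∧
        (∀ j : ℤ, -((0:ℕ) : ℤ) ≤ j → j ≤ ((0:ℕ) : ℤ) → ω.2 j = (fun _ => o) j)}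
        = Set.univ := by
      ext ω
      simp only [Set.mem_setOf_eq, Set.mem_univ, iff_true]
      exact ⟨fun i _ _ => hall _, fun j _ _ => hall _⟩
    rw [huniv, measure_univ] at h1
    rw [walkCylWeight, walkCylWeight] at h1
    simp only [if_pos rfl, Finset.range_zero, Finset.prod_empty, Finset.range_one,
      Finset.prod_singleton, stepProb] at h1
    rw [if_neg (G.irrefl)] at h1
    simp at h1
  -- identify the two events as countable decreasing intersections
  have hE : {ω : (ℤ → V) × (ℤ → V) | ω.1 (n : ℤ) = ω.2 (m : ℤ) ∧
      (∀ i : ℤ, (n : ℤ) ≤ i → ∀ j : ℤ, (m : ℤ) < j → ω.1 i ≠ ω.2 j) ∧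
      (∀ i : ℤ, (n : ℤ) < i → ∀ j : ℤ, j ≤ (m : ℤ) → ω.1 i ≠ ω.2 j)}
      = ⋂ k : ℕ, Ek n m k := by
    ext ω
    simp only [Set.mem_setOf_eq, Set.mem_iInter]
    constructor
    · rintro ⟨h1, h2, h3⟩ k
      exact ⟨h1, fun i hi1 _ j hj1 _ => h2 i hi1 j hj1,
        fun i hi1 _ j _ hj2 => h3 i hi1 j hj2⟩
    · intro h
      refine ⟨(h 0).1, ?_, ?_⟩
      · intro i hi j hj
        exact (h ((i - n).toNat + (j - m).toNat)).2.1 i hi (by omega) j hj (by omega)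
      · intro i hi j hj
        exact (h ((i - n).toNat + ((m : ℤ) - j).toNat)).2.2 i hi (by omega) j
          (by omega) hj
  have hF : {ω : (ℤ → V) × (ℤ → V) | ω.1 (-(n : ℤ)) = o ∧ ω.2 (-(m : ℤ)) = o ∧
      (∀ i : ℤ, 0 ≤ i → ∀ j : ℤ, 0 < j → ω.1 i ≠ ω.2 j) ∧
      (∀ i : ℤ, 0 < i → ∀ j : ℤ, j ≤ 0 → ω.1 i ≠ ω.2 j)}
      = ⋂ k : ℕ, Fk n m k o := by
    ext ω
    simp only [Set.mem_setOf_eq, Set.mem_iInter]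
    constructor
    · rintro ⟨h1, h2, h3, h4⟩ k
      exact ⟨h1, h2, fun i hi1 _ j hj1 _ => h3 i hi1 j hj1,
        fun i hi1 _ j _ hj2 => h4 i hi1 j hj2⟩
    · intro h
      refine ⟨(h 0).1, (h 0).2.1, ?_, ?_⟩
      · intro i hi j hj
        exact (h (i.toNat + j.toNat)).2.2.1 i hi (by omega) j hj (by omega)
      · intro i hi j hj
        exact (h (i.toNat + (-j).toNat)).2.2.2 i hi (by omega) j (by omega) hj
  -- the measure `ρ` realizing the right-hand side
  set ρ : Measure ((ℤ → V) × (ℤ → V)) :=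
    Measure.sum (fun v : V =>
      ((graphDeg G v : ℝ≥0∞) ^ 2 / (graphDeg G o : ℝ≥0∞) ^ 2) • ν v) with hρdef
  have hρ : ∀ S : Set ((ℤ → V) × (ℤ → V)), MeasurableSet S →
      ρ S = ∑' v : V, ((graphDeg G v : ℝ≥0∞) ^ 2 / (graphDeg G o : ℝ≥0∞) ^ 2) * ν v S := by
    intro S hS
    rw [hρdef, Measure.sum_apply _ hS]
    exact tsum_congr fun v => by rw [Measure.smul_apply, smul_eq_mul]
  have hcore : ∀ k : ℕ, μ (Ek n m k) = ρ (Fk n m k o) := by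
    intro k
    rw [hρ (Fk n m k o) (measurableSet_Fk n m k o)]
    exact per_k hlf o hdego hμ hν n m k
  -- continuity from above for both sequences
  have hmonoE : Antitone (fun k : ℕ => (Ek n m k : Set ((ℤ → V) × (ℤ → V)))) := by
    intro a b hab ω hω
    exact ⟨hω.1, fun i hi1 hi2 j hj1 hj2 => hω.2.1 i hi1 (by omega) j hj1 (by omega),
      fun i hi1 hi2 j hj1 hj2 => hω.2.2 i hi1 (by omega) j (by omega) hj2⟩
  have hmonoF : Antitone (fun k : ℕ => (Fk n m k o : Set ((ℤ → V) × (ℤ → V)))) := by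
    intro a b hab ω hω
    exact ⟨hω.1, hω.2.1,
      fun i hi1 hi2 j hj1 hj2 => hω.2.2.1 i hi1 (by omega) j hj1 (by omega),
      fun i hi1 hi2 j hj1 hj2 => hω.2.2.2 i hi1 (by omega) j (by omega) hj2⟩
  have ht1 : Filter.Tendsto (fun k : ℕ => μ (Ek n m k)) Filter.atTop
      (nhds (μ (⋂ k : ℕ, Ek n m k))) :=
    tendsto_measure_iInter_atTop (fun k => (measurableSet_Ek n m k).nullMeasurableSet)
      hmonoE ⟨0, measure_ne_top μ _⟩
  have ht2 : Filter.Tendsto (fun k : ℕ => ρ (Fk n m k o)) Filter.atTop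
      (nhds (ρ (⋂ k : ℕ, Fk n m k o))) :=
    tendsto_measure_iInter_atTop (fun k => (measurableSet_Fk n m k o).nullMeasurableSet)
      hmonoF ⟨0, by rw [← hcore 0]; exact measure_ne_top μ _⟩
  have hseq : (fun k : ℕ => μ (Ek n m k)) = fun k : ℕ => ρ (Fk n m k o) :=
    funext hcore
  have hmain : μ (⋂ k : ℕ, Ek n m k) = ρ (⋂ k : ℕ, Fk n m k o) :=
    tendsto_nhds_unique (hseq ▸ ht1) ht2
  rw [hE, hF, hmain]
  exact hρ _ (MeasurableSet.iInter fun k => measurableSet_Fk n m k o)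

end ArborealGas

end
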